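/- Let A_{j-1} : ℝ → ℝ be a convex continuous piecewise linear function. Then for any d ∈ ℝ, the function z ↦ min_{w ∈ ℝ} (|w − z − d| + A_{j-1}(w)) is convex, continuous, and piecewise linear; moreover if A_{j-1} has k linear pieces then this function has at most k+1 pieces. -/

import Mathlib

/-- `f : ℝ → ℝ` is piecewise linear with (at most) `k` pieces: there are breakpoints
`⊥ = a 0 ≤ a 1 ≤ ⋯ ≤ a k = ⊤` (in `EReal`) such that `f` is affine on each of the `k`
intervals they delimit. -/
def PWL (k : ℕ) (f : ℝ → ℝ) : Prop :=
  ∃ (a : Fin (k + 1) → EReal) (s c : Fin k → ℝ),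
    Monotone a ∧ a 0 = ⊥ ∧ a (Fin.last k) = ⊤ ∧
    ∀ (i : Fin k) (z : ℝ), a i.castSucc ≤ (z : EReal) → (z : EReal) ≤ a i.succ →
      f z = s i * z + c i


def PWLN (n : ℕ) (f : ℝ → ℝ) : Prop :=
  ∃ (a : ℕ → EReal) (s c : ℕ → ℝ),
    (∀ i, i < n → a i ≤ a (i+1)) ∧ a 0 = ⊥ ∧ a n = ⊤ ∧
    ∀ i, i < n → ∀ z : ℝ, a i ≤ (z : EReal) → (z : EReal) ≤ a (i+1) → f z = s i * z + c i

lemma chain_mono {a : ℕ → EReal} {n : ℕ} (h : ∀ i, i < n → a i ≤ a (i+1)) :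
    ∀ i j, i ≤ j → j ≤ n → a i ≤ a j := by
  intro i j hij hjn
  induction j with
  | zero => simp [Nat.le_zero.mp hij]
  | succ m ih =>
    rcases Nat.lt_or_ge i (m+1) with h1 | h1
    · exact le_trans (ih (by omega) (by omega)) (h m (by omega))
    · have : i = m + 1 := by omega
      simp [this]

lemma pwln_zero {f : ℝ → ℝ} (h : PWLN 0 f) : False := by
  obtain ⟨a, s, c, hmono, h0, hlast, hp⟩ := h
  rw [h0] at hlast
  exact absurd hlast bot_ne_top

lemma pwl_to_pwln {k : ℕ} {f : ℝ → ℝ} (h : PWL k f) : PWLN k f := by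
  obtain ⟨a, s, c, hmono, h0, hlast, hp⟩ := h
  refine ⟨fun i => a ⟨min i k, by omega⟩,
    fun i => if h : i < k then s ⟨i, h⟩ else 0,
    fun i => if h : i < k then c ⟨i, h⟩ else 0, ?_, ?_, ?_, ?_⟩
  · intro i hi
    exact hmono (Fin.mk_le_mk.mpr (by omega))
  · simpa using h0
  · simpa [Fin.last] using hlast
  · intro i hi z h1 h2
    dsimp only at h1 h2 ⊢
    have e1 : (⟨min i k, by omega⟩ : Fin (k+1)) = (⟨i, hi⟩ : Fin k).castSucc :=
      Fin.ext_iff.mpr (by simp [Fin.castSucc]; omega)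
    have e2 : (⟨min (i+1) k, by omega⟩ : Fin (k+1)) = (⟨i, hi⟩ : Fin k).succ :=
      Fin.ext_iff.mpr (by simp [Fin.succ]; omega)
    rw [e1] at h1; rw [e2] at h2
    simpa [hi] using hp ⟨i, hi⟩ z h1 h2

lemma pwln_to_pwl {k : ℕ} {f : ℝ → ℝ} (h : PWLN k f) : PWL k f := by
  obtain ⟨a, s, c, hmono, h0, hlast, hp⟩ := h
  refine ⟨fun j => a j.1, fun i => s i.1, fun i => c i.1, ?_, ?_, ?_, ?_⟩
  · intro j1 j2 hj
    exact chain_mono hmono j1.1 j2.1 hj (by omega)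
  · simpa using h0
  · simpa [Fin.last] using hlast
  · intro i z h1 h2
    exact hp i.1 i.2 z h1 h2

lemma pwln_succ {n : ℕ} {f : ℝ → ℝ} (h : PWLN n f) : PWLN (n+1) f := by
  rcases Nat.eq_zero_or_pos n with rfl | hn
  · exact absurd h pwln_zero
  obtain ⟨a, s, c, hmono, h0, hlast, hp⟩ := h
  refine ⟨fun j => if j < n then a j else ⊤, s, c, ?_, ?_, ?_, ?_⟩
  · intro i hi
    by_cases h1 : i < n
    · by_cases h2 : i + 1 < n
      · simpa [h1, h2] using hmono i (by omega)
      · simp [h1, h2, le_top]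
    · simp [h1, show ¬ (i+1 < n) by omega]
  · simp [hn, h0]
  · simp
  · intro i hi z h1 h2
    dsimp only at h1 h2
    by_cases h3 : i < n
    · apply hp i h3 z
      · simpa [h3] using h1
      · by_cases h4 : i + 1 < n
        · simpa [h4] using h2
        · have : i + 1 = n := by omega
          simp only [show ¬ (i+1 < n) by omega, if_false] at h2
          rw [this, hlast]; exact le_top
    · exfalso
      simp only [h3, if_false] at h1
      exact (EReal.coe_ne_top z) (top_le_iff.mp h1)

lemma pwln_mono {n m : ℕ} {f : ℝ → ℝ} (h : PWLN n f) (hnm : n ≤ m) : PWLN m f := by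
  induction m with
  | zero => simpa [Nat.le_zero.mp hnm] using h
  | succ j ih =>
    rcases Nat.lt_or_ge n (j+1) with h1 | h1
    · exact pwln_succ (ih (by omega))
    · have : n = j + 1 := by omega
      rwa [this] at h

def SPWLN (n : ℕ) (f : ℝ → ℝ) : Prop :=
  ∃ (a : ℕ → EReal) (s c : ℕ → ℝ),
    (∀ i, i < n → a i < a (i+1)) ∧ a 0 = ⊥ ∧ a n = ⊤ ∧
    ∀ i, i < n → ∀ z : ℝ, a i ≤ (z : EReal) → (z : EReal) ≤ a (i+1) → f z = s i * z + c i

lemma pwln_zero' {f : ℝ → ℝ} (h : PWLN 0 f) : False := by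
  obtain ⟨a, s, c, hmono, h0, hlast, hp⟩ := h
  rw [h0] at hlast
  exact absurd hlast bot_ne_top

lemma pwln_normalize : ∀ (n : ℕ) (f : ℝ → ℝ), PWLN n f →
    ∃ m, 1 ≤ m ∧ m ≤ n ∧ SPWLN m f := by
  intro n
  induction n with
  | zero => exact fun f h => absurd h pwln_zero'
  | succ n ih =>
    intro f h
    obtain ⟨a, s, c, hmono, h0, hlast, hp⟩ := h
    by_cases hs : ∀ i, i < n+1 → a i < a (i+1)
    · exact ⟨n+1, by omega, le_refl _, a, s, c, hs, h0, hlast, hp⟩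
    · push_neg at hs
      obtain ⟨i0, hi0, hi0'⟩ := hs
      have heq : a i0 = a (i0+1) := le_antisymm (hmono i0 hi0) hi0'
      have hred : PWLN n f := by
        refine ⟨fun j => if j < i0 then a j else a (j+1),
          fun j => if j < i0 then s j else s (j+1),
          fun j => if j < i0 then c j else c (j+1), ?_, ?_, ?_, ?_⟩
        · intro j hj
          by_cases h1 : j < i0
          · by_cases h2 : j + 1 < i0
            · simpa [h1, h2] using hmono j (by omega)
            · have h3 : j + 1 = i0 := by omega
              subst h3
              simp only [h1, if_true, h2, if_false]
              rw [← heq]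
              exact hmono j (by omega)
          · simp only [h1, if_false, show ¬ (j+1 < i0) by omega, if_false]
            exact hmono (j+1) (by omega)
        · by_cases h1 : 0 < i0
          · simp [h1, h0]
          · have h2 : i0 = 0 := by omega
            subst h2
            simp only [lt_irrefl, if_false]
            rw [← heq]
            exact h0
        · simp [show ¬ (n < i0) by omega, hlast]
        · intro j hj z h1 h2
          dsimp only at h1 h2 ⊢
          by_cases hc1 : j < i0
          · simp only [if_pos hc1] at h1 ⊢
            by_cases hc2 : j + 1 < i0
            · simp only [if_pos hc2] at h2
              exact hp j (by omega) z h1 h2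
            · have h3 : j + 1 = i0 := by omega
              simp only [if_neg hc2] at h2
              refine hp j (by omega) z h1 ?_
              rw [h3, ← heq] at h2
              rwa [h3]
          · simp only [if_neg hc1, if_neg (show ¬ (j+1 < i0) by omega)] at h1 h2 ⊢
            exact hp (j+1) (by omega) z h1 h2
      obtain ⟨m, hm1, hm2, hm3⟩ := ih f hred
      exact ⟨m, hm1, by omega, hm3⟩

lemma spwln_interior_real {n : ℕ} {a : ℕ → EReal}
    (hmono : ∀ i, i < n → a i < a (i+1)) (h0 : a 0 = ⊥) (hlast : a n = ⊤)
    {i : ℕ} (h1 : 1 ≤ i) (h2 : i ≤ n - 1) : ∃ r : ℝ, a i = (r : EReal) := by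
  have hchain : ∀ i j, i ≤ j → j ≤ n → a i ≤ a j := by
    intro i j hij hjn
    induction j with
    | zero => simp [Nat.le_zero.mp hij]
    | succ m ihm =>
      rcases Nat.lt_or_ge i (m+1) with hh | hh
      · exact le_trans (ihm (by omega) (by omega)) (le_of_lt (hmono m (by omega)))
      · have : i = m + 1 := by omega
        simp [this]
    
  have hn : 1 ≤ n := by omega
  have hbot : (⊥ : EReal) < a i := by
    calc (⊥ : EReal) = a 0 := h0.symm
      _ < a 1 := hmono 0 (by omega)
      _ ≤ a i := hchain 1 i h1 (by omega)
  have htop : a i < ⊤ := by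
    calc a i ≤ a (n-1) := hchain i (n-1) h2 (by omega)
      _ < a n := by
        have := hmono (n-1) (by omega)
        rwa [show n - 1 + 1 = n by omega] at this
      _ ≤ ⊤ := le_top
  exact ⟨(a i).toReal, (EReal.coe_toReal (ne_of_lt htop) (ne_of_gt hbot)).symm⟩


lemma exists_two_points {x y : EReal} (h : x < y) :
    ∃ u v : ℝ, u < v ∧ x ≤ (u:EReal) ∧ (v:EReal) ≤ y := by
  induction x with
  | bot =>
    induction y with
    | bot => exact absurd h (lt_irrefl _)
    | coe r => exact ⟨r-1, r, by linarith, bot_le, le_refl _⟩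
    | top => exact ⟨0, 1, by norm_num, bot_le, le_top⟩
  | coe x =>
    induction y with
    | bot => exact absurd h (by simp)
    | coe r =>
      have : x < r := EReal.coe_lt_coe_iff.mp h
      exact ⟨x, r, this, le_refl _, le_refl _⟩
    | top => exact ⟨x, x+1, by linarith, le_refl _, le_top⟩
  | top => exact absurd h (by simp)

lemma ereal_shift_le {e : EReal} {r z : ℝ} :
    e + (r : EReal) ≤ (z : EReal) ↔ e ≤ ((z - r : ℝ) : EReal) := by
  induction e with
  | bot =>
    have h1 : (⊥ : EReal) + (r : EReal) = ⊥ := rfl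
    rw [h1]; simp
  | coe x =>
    rw [← EReal.coe_add, EReal.coe_le_coe_iff, EReal.coe_le_coe_iff]
    constructor <;> intro <;> linarith
  | top =>
    have h1 : (⊤ : EReal) + (r : EReal) = ⊤ := rfl
    rw [h1]
    exact iff_of_false (fun hh => EReal.coe_ne_top z (top_le_iff.mp hh))
      (fun hh => EReal.coe_ne_top (z - r) (top_le_iff.mp hh))

lemma ereal_le_shift {e : EReal} {r z : ℝ} :
    (z : EReal) ≤ e + (r : EReal) ↔ ((z - r : ℝ) : EReal) ≤ e := by
  induction e with
  | bot =>
    have h1 : (⊥ : EReal) + (r : EReal) = ⊥ := rfl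
    rw [h1]
    exact iff_of_false (fun hh => EReal.coe_ne_bot z (le_bot_iff.mp hh))
      (fun hh => EReal.coe_ne_bot (z - r) (le_bot_iff.mp hh))
  | coe x =>
    rw [← EReal.coe_add, EReal.coe_le_coe_iff, EReal.coe_le_coe_iff]
    constructor <;> intro <;> linarith
  | top => simp

/-- an affine function agreeing with a convex function on `[u,v]` is a global minorant -/
lemma affine_minorant {f : ℝ → ℝ} (hconv : ConvexOn ℝ Set.univ f) {u v s c : ℝ}
    (huv : u < v) (hline : ∀ z : ℝ, u ≤ z → z ≤ v → f z = s * z + c) :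
    ∀ w : ℝ, s * w + c ≤ f w := by
  have hfu : f u = s * u + c := hline u (le_refl _) (le_of_lt huv)
  have hfv : f v = s * v + c := hline v (le_of_lt huv) (le_refl _)
  intro w
  rcases lt_trichotomy w u with hw | hw | hw
  · have hvw : 0 < v - w := by linarith
    have hα0 : (0:ℝ) ≤ (v-u)/(v-w) := le_of_lt (div_pos (by linarith) hvw)
    have hα1 : (v-u)/(v-w) < 1 := by rw [div_lt_one hvw]; linarith
    have hcomb : ((v-u)/(v-w)) * w + (1-(v-u)/(v-w)) * v = u := by
      field_simp
      ring
    have hc := hconv.2 (Set.mem_univ w) (Set.mem_univ v) hα0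
      (show (0:ℝ) ≤ 1 - (v-u)/(v-w) by linarith)
      (show (v-u)/(v-w) + (1 - (v-u)/(v-w)) = 1 by ring)
    simp only [smul_eq_mul] at hc
    rw [hcomb, hfu, hfv] at hc
    have h3 : 0 < (v-u)/(v-w) := div_pos (by linarith) hvw
    have e : s * u + c = ((v-u)/(v-w)) * (s*w + c) + (1-(v-u)/(v-w))*(s*v+c) := by
      field_simp
      ring
    have h4 : ((v-u)/(v-w)) * (s*w + c) ≤ ((v-u)/(v-w)) * f w := by linarith
    exact (mul_le_mul_iff_right₀ h3).mp h4
  · rw [hline w (le_of_eq hw.symm) (by linarith), hw]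
  · rcases le_or_gt w v with hw2 | hw2
    · rw [hline w (by linarith) hw2]
    · have hwu : 0 < w - u := by linarith
      have hα0 : (0:ℝ) ≤ (w-v)/(w-u) := le_of_lt (div_pos (by linarith) hwu)
      have hα1 : (w-v)/(w-u) < 1 := by rw [div_lt_one hwu]; linarith
      have hcomb : ((w-v)/(w-u)) * u + (1-(w-v)/(w-u)) * w = v := by
        field_simp
        ring
      have hc := hconv.2 (Set.mem_univ u) (Set.mem_univ w) hα0
        (show (0:ℝ) ≤ 1 - (w-v)/(w-u) by linarith)
        (show (w-v)/(w-u) + (1 - (w-v)/(w-u)) = 1 by ring)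
      simp only [smul_eq_mul] at hc
      rw [hcomb, hfu, hfv] at hc
      have h3 : 0 < 1 - (w-v)/(w-u) := by linarith
      have e : s * v + c = ((w-v)/(w-u)) * (s*u + c) + (1-(w-v)/(w-u))*(s*w+c) := by
        field_simp
        ring
      have h4 : (1-(w-v)/(w-u)) * (s*w + c) ≤ (1-(w-v)/(w-u)) * f w := by linarith
      exact (mul_le_mul_iff_right₀ h3).mp h4

section Main
variable {n : ℕ} {f : ℝ → ℝ} {d : ℝ}

lemma chain_mono'' {a : ℕ → EReal} {n : ℕ} (h : ∀ i, i < n → a i ≤ a (i+1)) :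
    ∀ i j, i ≤ j → j ≤ n → a i ≤ a j := by
  intro i j hij hjn
  induction j with
  | zero => simp [Nat.le_zero.mp hij]
  | succ m ih =>
    rcases Nat.lt_or_ge i (m+1) with h1 | h1
    · exact le_trans (ih (by omega) (by omega)) (h m (by omega))
    · have : i = m + 1 := by omega
      simp [this]

lemma abs_mul_le {t y : ℝ} (h1 : -1 ≤ t) (h2 : t ≤ 1) : t * y ≤ |y| := by
  nlinarith [le_abs_self y, neg_abs_le y, abs_nonneg y]

set_option maxHeartbeats 1000000 in
lemma main_pwln (hconv : ConvexOn ℝ Set.univ f)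
    (hfin : ∀ z : ℝ, BddBelow (Set.range fun w => |w - z - d| + f w))
    (hsp : SPWLN n f) (hn : 1 ≤ n) :
    PWLN (n+1) (fun z : ℝ => ⨅ w : ℝ, (|w - z - d| + f w)) := by
  classical
  obtain ⟨a, s, c, hmono, h0, hlast, hp⟩ := hsp
  set g : ℝ → ℝ := fun z : ℝ => ⨅ w : ℝ, (|w - z - d| + f w) with hg
  have gle : ∀ z w : ℝ, g z ≤ |w - z - d| + f w := fun z w => ciInf_le (hfin z) w
  have gge : ∀ z m : ℝ, (∀ w, m ≤ |w - z - d| + f w) → m ≤ g z := fun z m h => le_ciInf h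
  have hchain : ∀ i j, i ≤ j → j ≤ n → a i ≤ a j :=
    chain_mono (fun i hi => le_of_lt (hmono i hi))
  -- two points in each piece
  have htp : ∀ i, i < n → ∃ u v : ℝ, u < v ∧ a i ≤ (u:EReal) ∧ (v:EReal) ≤ a (i+1) :=
    fun i hi => exists_two_points (hmono i hi)
  -- global affine minorants from each piece
  have hmin : ∀ i, i < n → ∀ w : ℝ, s i * w + c i ≤ f w := by
    intro i hi
    obtain ⟨u, v, huv, hu, hv⟩ := htp i hi
    refine affine_minorant hconv huv (fun z hz1 hz2 => hp i hi z ?_ ?_)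
    · exact le_trans hu (by exact_mod_cast hz1)
    · exact le_trans (by exact_mod_cast hz2) hv
  -- slopes are monotone
  have hslope : ∀ i j, i ≤ j → j < n → s i ≤ s j := by
    intro i j hij hj
    rcases Nat.eq_or_lt_of_le hij with rfl | hlt
    · exact le_refl _
    obtain ⟨u1, v1, huv1, hu1, hv1⟩ := htp i (by omega)
    obtain ⟨u2, v2, huv2, hu2, hv2⟩ := htp j hj
    have hle : v1 ≤ u2 := by
      have : (v1:EReal) ≤ (u2:EReal) :=
        le_trans hv1 (le_trans (hchain (i+1) j (by omega) (by omega)) hu2)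
      exact_mod_cast this
    have hf1 : f u1 = s i * u1 + c i :=
      hp i (by omega) u1 hu1 (le_trans (by exact_mod_cast le_of_lt huv1) hv1)
    have hf2 : f u2 = s j * u2 + c j :=
      hp j hj u2 hu2 (le_trans (by exact_mod_cast le_of_lt huv2) hv2)
    have m1 : s j * u1 + c j ≤ f u1 := hmin j hj u1
    have m2 : s i * u2 + c i ≤ f u2 := hmin i (by omega) u2
    rw [hf1] at m1
    rw [hf2] at m2
    have hu12 : u1 < u2 := lt_of_lt_of_le huv1 hle
    nlinarith
  -- leftmost slope ≤ 1
  have hs0 : s 0 ≤ 1 := by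
    by_contra hs
    push_neg at hs
    obtain ⟨m, hm⟩ := hfin 0
    have hm' : ∀ w : ℝ, m ≤ |w - 0 - d| + f w := fun w => hm (Set.mem_range_self w)
    have hr0 : ∃ r0 : ℝ, ∀ w : ℝ, w ≤ r0 → (w:EReal) ≤ a 1 := by
      by_cases ht : a 1 = ⊤
      · exact ⟨0, fun w _ => ht ▸ le_top⟩
      · have hb : a 1 ≠ ⊥ := by
          intro hb
          have := hmono 0 (by omega)
          rw [h0, hb] at this
          exact absurd this (lt_irrefl _)
        refine ⟨(a 1).toReal, fun w hw => ?_⟩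
        calc (w : EReal) ≤ ((a 1).toReal : EReal) := by exact_mod_cast hw
          _ = a 1 := EReal.coe_toReal ht hb
    obtain ⟨r0, hr0⟩ := hr0
    set w : ℝ := min r0 (min d ((m - d - c 0 - 1)/(s 0 - 1))) with hw
    have hfw : f w = s 0 * w + c 0 :=
      hp 0 (by omega) w (h0 ▸ bot_le) (hr0 w (le_trans (min_le_left _ _) (le_refl _)))
    have hwd : w ≤ d := le_trans (min_le_right _ _) (min_le_left _ _)
    have habs : |w - 0 - d| = d - w := by
      rw [abs_of_nonpos (by linarith)]; ring
    have hwq : w ≤ (m - d - c 0 - 1)/(s 0 - 1) :=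
      le_trans (min_le_right _ _) (min_le_right _ _)
    have hs1 : 0 < s 0 - 1 := by linarith
    have : (s 0 - 1) * w ≤ m - d - c 0 - 1 := by
      calc (s 0 - 1) * w ≤ (s 0 - 1) * ((m - d - c 0 - 1)/(s 0 - 1)) :=
            mul_le_mul_of_nonneg_left hwq (le_of_lt hs1)
        _ = m - d - c 0 - 1 := by field_simp
    have := hm' w
    rw [habs, hfw] at this
    linarith
  -- rightmost slope ≥ -1
  have hsn : -1 ≤ s (n-1) := by
    by_contra hs
    push_neg at hs
    obtain ⟨m, hm⟩ := hfin 0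
    have hm' : ∀ w : ℝ, m ≤ |w - 0 - d| + f w := fun w => hm (Set.mem_range_self w)
    have hr0 : ∃ r0 : ℝ, ∀ w : ℝ, r0 ≤ w → a (n-1) ≤ (w:EReal) := by
      by_cases ht : a (n-1) = ⊥
      · exact ⟨0, fun w _ => ht ▸ bot_le⟩
      · have hb : a (n-1) ≠ ⊤ := by
          intro hb
          have := hmono (n-1) (by omega)
          rw [hb] at this
          exact absurd this (not_top_lt)
        refine ⟨(a (n-1)).toReal, fun w hw => ?_⟩
        calc a (n-1) = ((a (n-1)).toReal : EReal) := (EReal.coe_toReal hb ht).symm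
          _ ≤ (w : EReal) := by exact_mod_cast hw
    obtain ⟨r0, hr0⟩ := hr0
    set w : ℝ := max r0 (max d ((m - c (n-1) + d - 1)/(s (n-1) + 1))) with hw
    have hfw : f w = s (n-1) * w + c (n-1) := by
      refine hp (n-1) (by omega) w (hr0 w (le_max_left _ _)) ?_
      rw [show n - 1 + 1 = n by omega, hlast]
      exact le_top
    have hwd : d ≤ w := le_trans (le_max_left _ _) (le_max_right _ _)
    have habs : |w - 0 - d| = w - d := by
      rw [abs_of_nonneg (by linarith)]; ring
    have hwq : (m - c (n-1) + d - 1)/(s (n-1) + 1) ≤ w :=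
      le_trans (le_max_right _ _) (le_max_right _ _)
    have hs1 : s (n-1) + 1 < 0 := by linarith
    have : (s (n-1) + 1) * w ≤ m - c (n-1) + d - 1 := by
      calc (s (n-1) + 1) * w ≤ (s (n-1) + 1) * ((m - c (n-1) + d - 1)/(s (n-1) + 1)) := by
            apply mul_le_mul_of_nonpos_left hwq (le_of_lt hs1)
        _ = m - c (n-1) + d - 1 := by
            rw [mul_comm, div_mul_cancel₀ _ (ne_of_lt hs1)]
    have := hm' w
    rw [habs, hfw] at this
    linarith
  -- clip indices
  set p : ℕ := Nat.find (⟨n-1, by omega, hsn⟩ : ∃ m, m < n ∧ -1 ≤ s m) with hpdef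
  have hpspec : p < n ∧ -1 ≤ s p := Nat.find_spec (⟨n-1, by omega, hsn⟩ : ∃ m, m < n ∧ -1 ≤ s m)
  have hplt : ∀ i, i < p → s i < -1 := by
    intro i hi
    have := Nat.find_min (⟨n-1, by omega, hsn⟩ : ∃ m, m < n ∧ -1 ≤ s m) hi
    push_neg at this
    exact this (by omega)
  have hple : p ≤ n - 1 := Nat.find_le ⟨by omega, hsn⟩
  set q : ℕ := Nat.find (⟨n, Or.inl rfl⟩ : ∃ m, m = n ∨ (m < n ∧ 1 < s m)) with hqdef
  have hqspec : q = n ∨ (q < n ∧ 1 < s q) :=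
    Nat.find_spec (⟨n, Or.inl rfl⟩ : ∃ m, m = n ∨ (m < n ∧ 1 < s m))
  have hqle : q ≤ n := Nat.find_le (Or.inl rfl)
  have hqlt : ∀ i, i < q → s i ≤ 1 := by
    intro i hi
    have := Nat.find_min (⟨n, Or.inl rfl⟩ : ∃ m, m = n ∨ (m < n ∧ 1 < s m)) hi
    push_neg at this
    obtain ⟨h1', h2'⟩ := this
    exact h2' (by omega)
  have hpltn : p < n := hpspec.1
  have hpq : p ≤ q := by
    by_contra hc
    push_neg at hc
    have h1 := hplt q hc
    rcases hqspec with h2 | h2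
    · omega
    · linarith [h2.2]
  have hq1 : 1 ≤ q := by
    rcases Nat.eq_zero_or_pos q with h1 | h1
    · rcases hqspec with h2 | h2
      · omega
      · rw [h1] at h2
        linarith [h2.2, hs0]
    · exact h1
  have hsge : ∀ i, p ≤ i → i < n → -1 ≤ s i := fun i hh1 hh2 =>
    le_trans hpspec.2 (hslope p i hh1 hh2)
  refine ⟨fun j => if j = 0 then (⊥:EReal) else
      if p + j - 1 ≤ q then a (p + j - 1) + ((-d:ℝ):EReal) else ⊤,
    fun j => if j = 0 then -1 else if p + j - 1 < q then s (p + j - 1) else 1,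
    fun j => if j = 0 then (f ((a p).toReal) + (a p).toReal - d) else
      if p + j - 1 < q then s (p+j-1) * d + c (p+j-1) else
      (f ((a q).toReal) - (a q).toReal + d), ?_, ?_, ?_, ?_⟩
  · -- local monotonicity of breakpoints
    intro j hj
    by_cases hj0 : j = 0
    · subst hj0
      simp only [eq_self_iff_true, if_true, if_pos rfl, if_neg (Nat.one_ne_zero)]
      exact bot_le
    · obtain ⟨j', rfl⟩ : ∃ j', j = j' + 1 := ⟨j - 1, by omega⟩
      have e1 : p + (j' + 1) - 1 = p + j' := by omega
      have e2 : p + (j' + 1 + 1) - 1 = p + j' + 1 := by omega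
      simp only [if_neg (show j' + 1 ≠ 0 by omega), if_neg (show j' + 1 + 1 ≠ 0 by omega), e1, e2]
      by_cases hc1 : p + j' + 1 ≤ q
      · rw [if_pos (show p + j' ≤ q by omega), if_pos hc1]
        exact add_le_add_left (hchain (p+j') (p+j'+1) (by omega) (by omega)) _
      · rw [if_neg hc1]
        exact le_top
  · simp
  · -- last breakpoint is ⊤
    simp only [if_neg (show n + 1 ≠ 0 by omega)]
    have e1 : p + (n + 1) - 1 = p + n := by omega
    rw [e1]
    by_cases hc1 : p + n ≤ q
    · have hp0 : p = 0 := by omega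
      have hqn : q = n := by omega
      rw [if_pos hc1, hp0, Nat.zero_add, hlast]
      rfl
    · rw [if_neg hc1]
  · -- the pieces
    intro j hj z h1 h2
    by_cases hj0 : j = 0
    · subst hj0
      simp only [eq_self_iff_true, if_true, if_pos rfl, if_neg (Nat.one_ne_zero)] at h1 h2 ⊢
      have e1 : p + 1 - 1 = p := by omega
      rw [e1, if_pos hpq] at h2
      by_cases hp0 : p = 0
      · exfalso
        rw [hp0, h0] at h2
        exact EReal.coe_ne_bot z (le_bot_iff.mp h2)
      · obtain ⟨Ar, hAr⟩ := spwln_interior_real hmono h0 hlast (show 1 ≤ p by omega) hple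
        have hAr' : (a p).toReal = Ar := by rw [hAr]; exact EReal.toReal_coe Ar
        rw [hAr'] 
        rw [hAr, show ((Ar:ℝ):EReal) + ((-d:ℝ):EReal) = ((Ar + -d : ℝ):EReal) by exact_mod_cast rfl,
          EReal.coe_le_coe_iff] at h2
        -- z ≤ Ar - d
        have hfAr1 : f Ar = s p * Ar + c p := by
          refine hp p hpltn Ar (le_of_eq hAr) ?_
          rw [← hAr]
          exact le_of_lt (hmono p hpltn)
        have hfAr2 : f Ar = s (p-1) * Ar + c (p-1) := by
          refine hp (p-1) (by omega) Ar ?_ ?_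
          · rw [← hAr]
            exact hchain (p-1) p (by omega) (by omega)
          · rw [show p - 1 + 1 = p by omega, ← hAr]
        have hP1 : ∀ w : ℝ, -w + (f Ar + Ar) ≤ f w := by
          intro w
          rcases le_total w Ar with hw | hw
          · have hm1 := hmin (p-1) (by omega) w
            have hs1 := hplt (p-1) (by omega)
            nlinarith [mul_nonneg (show (0:ℝ) ≤ -(s (p-1)) - 1 by linarith)
              (show (0:ℝ) ≤ Ar - w by linarith)]
          · have hm1 := hmin p hpltn w
            have hs1 := hpspec.2
            nlinarith [mul_nonneg (show (0:ℝ) ≤ s p + 1 by linarith)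
              (show (0:ℝ) ≤ w - Ar by linarith)]
        apply le_antisymm
        · calc g z ≤ |Ar - z - d| + f Ar := gle z Ar
            _ = -1 * z + (f Ar + Ar - d) := by
                rw [abs_of_nonneg (by linarith)]; ring
        · apply gge
          intro w
          have h3 := le_abs_self (w - z - d)
          have h4 := hP1 w
          linarith
    · obtain ⟨j', rfl⟩ : ∃ j', j = j' + 1 := ⟨j - 1, by omega⟩
      have e1 : p + (j' + 1) - 1 = p + j' := by omega
      have e2 : p + (j' + 1 + 1) - 1 = p + j' + 1 := by omega
      simp only [if_neg (show j' + 1 ≠ 0 by omega), if_neg (show j' + 1 + 1 ≠ 0 by omega),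
        e1, e2] at h1 h2 ⊢
      by_cases hc1 : p + j' < q
      · -- middle piece
        rw [if_pos (show p + j' ≤ q by omega)] at h1
        rw [if_pos (show p + j' + 1 ≤ q by omega)] at h2
        simp only [if_pos hc1]
        have hin : p + j' < n := by omega
        have h1' : a (p + j') ≤ ((z + d : ℝ) : EReal) := by
          have := ereal_shift_le.mp h1
          rwa [show z - -d = z + d by ring] at this
        have h2' : ((z + d : ℝ) : EReal) ≤ a (p + j' + 1) := by
          have := ereal_le_shift.mp h2
          rwa [show z - -d = z + d by ring] at this
        have hfzd : f (z+d) = s (p+j') * (z+d) + c (p+j') := hp (p+j') hin (z+d) h1' h2'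
        have hsile : s (p+j') ≤ 1 := hqlt (p+j') hc1
        have hsige : -1 ≤ s (p+j') := hsge (p+j') (by omega) hin
        apply le_antisymm
        · calc g z ≤ |(z+d) - z - d| + f (z+d) := gle z (z+d)
            _ = s (p+j') * z + (s (p+j') * d + c (p+j')) := by
                rw [show (z+d)-z-d = 0 by ring, abs_zero, hfzd]; ring
        · apply gge
          intro w
          have h3 := abs_mul_le (y := z + d - w) hsige hsile
          have h4 : |z + d - w| = |w - z - d| := by
            rw [abs_sub_comm]; congr 1; ring
          have h5 := hmin (p+j') hin w
          rw [h4] at h3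
          linarith
      · by_cases hc2 : q < p + j'
        · -- vacuous piece beyond the clip
          exfalso
          rw [if_neg (by omega)] at h1
          exact EReal.coe_ne_top z (top_le_iff.mp h1)
        · -- i = q : right clip piece
          have hiq : p + j' = q := by omega
          rw [if_pos (show p + j' ≤ q by omega), hiq] at h1
          rw [if_neg (show ¬ (p + j' + 1 ≤ q) by omega)] at h2
          simp only [if_neg (show ¬ (p + j' < q) by omega)]
          by_cases hqn : q = n
          · exfalso
            rw [hqn, hlast] at h1
            have : (⊤:EReal) + ((-d:ℝ):EReal) = ⊤ := rfl
            rw [this] at h1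
            exact EReal.coe_ne_top z (top_le_iff.mp h1)
          · have hqltn : q < n := by omega
            obtain ⟨Br, hBr⟩ := spwln_interior_real hmono h0 hlast hq1 (by omega)
            have hBr' : (a q).toReal = Br := by rw [hBr]; exact EReal.toReal_coe Br
            rw [hBr']
            rw [hBr, show ((Br:ℝ):EReal) + ((-d:ℝ):EReal) = ((Br + -d : ℝ):EReal) by exact_mod_cast rfl,
              EReal.coe_le_coe_iff] at h1
            -- Br - d ≤ z
            have hsq : 1 < s q := by
              rcases hqspec with hh | hh
              · omega
              · exact hh.2
            have hsq1 : s (q-1) ≤ 1 := hqlt (q-1) (by omega)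
            have hfBr1 : f Br = s q * Br + c q := by
              refine hp q hqltn Br (le_of_eq hBr) ?_
              rw [← hBr]
              exact le_of_lt (hmono q hqltn)
            have hfBr2 : f Br = s (q-1) * Br + c (q-1) := by
              refine hp (q-1) (by omega) Br ?_ ?_
              · rw [← hBr]
                exact hchain (q-1) q (by omega) (by omega)
              · rw [show q - 1 + 1 = q by omega, ← hBr]
            have hP2 : ∀ w : ℝ, w + (f Br - Br) ≤ f w := by
              intro w
              rcases le_total w Br with hw | hw
              · have hm1 := hmin (q-1) (by omega) w
                have hprod : (0:ℝ) ≤ (1 - s (q-1)) * (Br - w) :=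
                  mul_nonneg (by linarith) (by linarith)
                nlinarith [hprod]
              · have hm1 := hmin q hqltn w
                have hprod : (0:ℝ) ≤ (s q - 1) * (w - Br) :=
                  mul_nonneg (by linarith) (by linarith)
                nlinarith [hprod]
            apply le_antisymm
            · calc g z ≤ |Br - z - d| + f Br := gle z Br
                _ = 1 * z + (f Br - Br + d) := by
                    rw [abs_of_nonpos (by linarith)]; ring
            · apply gge
              intro w
              have h3 := neg_abs_le (w - z - d)
              have h4 := hP2 w
              linarith

end Main

section CC
variable {f : ℝ → ℝ} {d : ℝ}

lemma g_convex (hconv : ConvexOn ℝ Set.univ f)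
    (hfin : ∀ z : ℝ, BddBelow (Set.range fun w => |w - z - d| + f w)) :
    ConvexOn ℝ Set.univ (fun z : ℝ => ⨅ w : ℝ, (|w - z - d| + f w)) := by
  set g : ℝ → ℝ := fun z : ℝ => ⨅ w : ℝ, (|w - z - d| + f w) with hg
  have gle : ∀ z w : ℝ, g z ≤ |w - z - d| + f w := fun z w => ciInf_le (hfin z) w
  refine ⟨convex_univ, ?_⟩
  intro x _ y _ α β hα hβ hαβ
  simp only [smul_eq_mul]
  rcases eq_or_lt_of_le hα with h0 | hα'
  · have hβ1 : β = 1 := by linarith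
    rw [← h0, hβ1]
    simp
  rcases eq_or_lt_of_le hβ with h0 | hβ'
  · have hα1 : α = 1 := by linarith
    rw [← h0, hα1]
    simp
  refine le_of_forall_pos_le_add ?_
  intro ε hε
  obtain ⟨w1, hw1⟩ := exists_lt_of_ciInf_lt (show g x < g x + ε by linarith)
  obtain ⟨w2, hw2⟩ := exists_lt_of_ciInf_lt (show g y < g y + ε by linarith)
  have key : g (α * x + β * y) ≤ |α * w1 + β * w2 - (α * x + β * y) - d| + f (α * w1 + β * w2) :=
    gle _ _
  have habs : |α * w1 + β * w2 - (α * x + β * y) - d|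
      ≤ α * |w1 - x - d| + β * |w2 - y - d| := by
    have he : α * w1 + β * w2 - (α * x + β * y) - d
        = α * (w1 - x - d) + β * (w2 - y - d) := by
      linear_combination d * hαβ
    rw [he]
    calc |α * (w1 - x - d) + β * (w2 - y - d)|
        ≤ |α * (w1 - x - d)| + |β * (w2 - y - d)| := abs_add_le _ _
      _ = α * |w1 - x - d| + β * |w2 - y - d| := by
          rw [abs_mul, abs_mul, abs_of_pos hα', abs_of_pos hβ']
  have hf : f (α * w1 + β * w2) ≤ α * f w1 + β * f w2 := by
    have := hconv.2 (Set.mem_univ w1) (Set.mem_univ w2) hα hβ hαβ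
    simpa [smul_eq_mul] using this
  have : g (α * x + β * y) ≤ α * (|w1 - x - d| + f w1) + β * (|w2 - y - d| + f w2) := by
    calc g (α * x + β * y) ≤ _ := key
      _ ≤ α * |w1 - x - d| + β * |w2 - y - d| + f (α * w1 + β * w2) := by linarith
      _ ≤ _ := by linarith
  calc g (α * x + β * y) ≤ α * (|w1 - x - d| + f w1) + β * (|w2 - y - d| + f w2) := this
    _ ≤ α * (g x + ε) + β * (g y + ε) := by
        have := mul_le_mul_of_nonneg_left (le_of_lt hw1) hα
        have := mul_le_mul_of_nonneg_left (le_of_lt hw2) hβ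
        linarith
    _ = α * g x + β * g y + ε := by linear_combination ε * hαβ

lemma g_cont (hfin : ∀ z : ℝ, BddBelow (Set.range fun w => |w - z - d| + f w)) :
    Continuous (fun z : ℝ => ⨅ w : ℝ, (|w - z - d| + f w)) := by
  set g : ℝ → ℝ := fun z : ℝ => ⨅ w : ℝ, (|w - z - d| + f w) with hg
  have gle : ∀ z w : ℝ, g z ≤ |w - z - d| + f w := fun z w => ciInf_le (hfin z) w
  have key : ∀ z1 z2 : ℝ, g z1 ≤ g z2 + |z1 - z2| := by
    intro z1 z2
    rw [← sub_le_iff_le_add]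
    apply le_ciInf
    intro w
    have h1 : g z1 ≤ |w - z1 - d| + f w := gle z1 w
    have h2 : |w - z1 - d| - |w - z2 - d| ≤ |z1 - z2| := by
      calc |w - z1 - d| - |w - z2 - d| ≤ |(w - z1 - d) - (w - z2 - d)| := abs_sub_abs_le_abs_sub _ _
        _ = |z2 - z1| := by congr 1; ring
        _ = |z1 - z2| := abs_sub_comm _ _
    linarith
  have : LipschitzWith 1 g := by
    rw [lipschitzWith_iff_dist_le_mul]
    intro z1 z2
    rw [Real.dist_eq, Real.dist_eq, NNReal.coe_one, one_mul]
    rw [abs_le]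
    constructor
    · have := key z2 z1
      rw [abs_sub_comm] at this
      linarith
    · have := key z1 z2
      linarith
  exact this.continuous
end CC


theorem stmt8 (k : ℕ) (f : ℝ → ℝ) (hconv : ConvexOn ℝ Set.univ f)
    (hcont : Continuous f) (hpwl : PWL k f) (d : ℝ)
    (hfin : ∀ z : ℝ, BddBelow (Set.range fun w => |w - z - d| + f w)) :
    ConvexOn ℝ Set.univ (fun z : ℝ => ⨅ w : ℝ, (|w - z - d| + f w)) ∧
    Continuous (fun z : ℝ => ⨅ w : ℝ, (|w - z - d| + f w)) ∧
    PWL (k + 1) (fun z : ℝ => ⨅ w : ℝ, (|w - z - d| + f w)) := by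
  refine ⟨g_convex hconv hfin, g_cont hfin, ?_⟩
  obtain ⟨m, hm1, hm2, hsp⟩ := pwln_normalize k f (pwl_to_pwln hpwl)
  have h := main_pwln hconv hfin hsp hm1
  exact pwln_to_pwl (pwln_mono h (by omega))
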